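/- Let n₁₂, n₂₃, n₃₄, n₁₄ be integers ≥ 3 and μ_{ij} = 4·cos²(π/n_{ij}). Let v₁₃, v₂₃, v₂₄, v₃₄, v₄₂ be real numbers with v₂₃, v₂₄, v₃₄, v₄₂ < 0, v₁₃ ≤ −4, and v₂₄·v₄₂ ≥ 4, and let M be the 4×4 matrix with rows (2, −μ₁₂, v₁₃, −μ₁₄), (−1, 2, v₂₃, v₂₄), (−1, μ₂₃/v₂₃, 2, v₃₄), (−1, v₄₂, μ₃₄/v₃₄, 2). If v₁₃ = −4 or v₂₄·v₄₂ = 4, then det M ≠ 0. -/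

import Mathlib

private lemma stmt_9_aux (a b c d p q r s t : ℝ)
    (ha0 : 0 ≤ a) (ha4 : a ≤ 4) (hb : 0 < b) (hc : 0 < c) (hd0 : 0 < d) (hd4 : d ≤ 4)
    (hq : q < 0) (hr : r < 0) (hs : s < 0) (ht : t < 0)
    (hp : p ≤ -4) (hrt : 4 ≤ r * t) (hbd : p = -4 ∨ r * t = 4) :
    16*q*s - 4*q*r*s*t + 2*q^2*s^2*t + 4*p*q*s - 2*p*q*s^2 + p*q*s^2*t - p*q*r*s*t
      - 4*d*q*s + 2*d*q*s*t - d*q^2*s*t - 4*c*q*s + 2*c*d*q - 4*b*q*s - 2*b*p*s + b*p*r*s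
      + b*d*q*s + 2*b*c*r - b*c*d - 4*a*q*s + 2*a*q*r*s + 2*a*q^2*s - a*q^2*s^2
      + a*c*q*s - a*c*q*r < 0 := by
  obtain ⟨u, rfl⟩ : ∃ u, q = -u := ⟨-q, by ring⟩
  obtain ⟨w, rfl⟩ : ∃ w, r = -w := ⟨-r, by ring⟩
  obtain ⟨v, rfl⟩ : ∃ v, s = -v := ⟨-s, by ring⟩
  obtain ⟨x, rfl⟩ : ∃ x, t = -x := ⟨-t, by ring⟩
  obtain ⟨e, rfl⟩ : ∃ e, p = -(4 + e) := ⟨-(p + 4), by ring⟩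
  have hu : 0 < u := by linarith
  have hw : 0 < w := by linarith
  have hv : 0 < v := by linarith
  have hx : 0 < x := by linarith
  have he : 0 ≤ e := by linarith
  have hwx : 4 ≤ w * x := by nlinarith
  have hS : 16*(-u)*(-v) - 4*(-u)*(-w)*(-v)*(-x) + 2*(-u)^2*(-v)^2*(-x)
      + 4*(-(4+e))*(-u)*(-v) - 2*(-(4+e))*(-u)*(-v)^2 + (-(4+e))*(-u)*(-v)^2*(-x)
      - (-(4+e))*(-u)*(-w)*(-v)*(-x)
      - 4*d*(-u)*(-v) + 2*d*(-u)*(-v)*(-x) - d*(-u)^2*(-v)*(-x) - 4*c*(-u)*(-v)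
      + 2*c*d*(-u) - 4*b*(-u)*(-v) - 2*b*(-(4+e))*(-v) + b*(-(4+e))*(-w)*(-v)
      + b*d*(-u)*(-v) + 2*b*c*(-w) - b*c*d - 4*a*(-u)*(-v) + 2*a*(-u)*(-w)*(-v)
      + 2*a*(-u)^2*(-v) - a*(-u)^2*(-v)^2 + a*c*(-u)*(-v) - a*c*(-u)*(-w)
      = -((4-a)*c*u*v + (4-d)*b*u*v + 2*a*u^2*v + a*u^2*v^2 + 4*a*u*v + 2*a*u*v*w
        + a*c*u*w + b*c*d + 2*b*c*w + 8*b*v + 2*b*e*v + 4*b*v*w + b*e*v*w + 2*c*d*u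
        + 4*d*u*v + d*u^2*v*x + 2*d*u*v*x + 2*u^2*v^2*x + 8*u*v^2 + 2*e*u*v^2
        + 4*u*v^2*x + e*u*v^2*x + e*u*v*(4 - w*x)) := by ring
  rw [hS]
  have hbz : e*u*v*(4 - w*x) = 0 := by
    rcases hbd with h | h
    · have : e = 0 := by linarith [neg_eq_iff_eq_neg.mp h]
      rw [this]; ring
    · have : w * x = 4 := by nlinarith
      rw [this]; ring
  have h1 : 0 ≤ (4-a)*c*u*v :=
    mul_nonneg (mul_nonneg (mul_nonneg (by linarith) hc.le) hu.le) hv.le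
  have h2 : 0 ≤ (4-d)*b*u*v :=
    mul_nonneg (mul_nonneg (mul_nonneg (by linarith) hb.le) hu.le) hv.le
  have h3 : 0 ≤ 2*a*u^2*v :=
    mul_nonneg (mul_nonneg (by linarith) (sq_nonneg u)) hv.le
  have h4 : 0 ≤ a*u^2*v^2 :=
    mul_nonneg (mul_nonneg ha0 (sq_nonneg u)) (sq_nonneg v)
  have h5 : 0 ≤ 4*a*u*v :=
    mul_nonneg (mul_nonneg (by linarith) hu.le) hv.le
  have h6 : 0 ≤ 2*a*u*v*w :=
    mul_nonneg (mul_nonneg (mul_nonneg (by linarith) hu.le) hv.le) hw.le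
  have h7 : 0 ≤ a*c*u*w :=
    mul_nonneg (mul_nonneg (mul_nonneg ha0 hc.le) hu.le) hw.le
  have h8 : 0 < b*c*d := by positivity
  have h9 : 0 ≤ 2*b*c*w :=
    mul_nonneg (mul_nonneg (by linarith) hc.le) hw.le
  have h10 : 0 ≤ 8*b*v := mul_nonneg (by linarith) hv.le
  have h11 : 0 ≤ 2*b*e*v :=
    mul_nonneg (mul_nonneg (by linarith) he) hv.le
  have h12 : 0 ≤ 4*b*v*w :=
    mul_nonneg (mul_nonneg (by linarith) hv.le) hw.le
  have h13 : 0 ≤ b*e*v*w :=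
    mul_nonneg (mul_nonneg (mul_nonneg hb.le he) hv.le) hw.le
  have h14 : 0 ≤ 2*c*d*u :=
    mul_nonneg (mul_nonneg (by linarith) hd0.le) hu.le
  have h15 : 0 ≤ 4*d*u*v :=
    mul_nonneg (mul_nonneg (by linarith) hu.le) hv.le
  have h16 : 0 ≤ d*u^2*v*x :=
    mul_nonneg (mul_nonneg (mul_nonneg hd0.le (sq_nonneg u)) hv.le) hx.le
  have h17 : 0 ≤ 2*d*u*v*x :=
    mul_nonneg (mul_nonneg (mul_nonneg (by linarith) hu.le) hv.le) hx.le
  have h18 : 0 ≤ 2*u^2*v^2*x :=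
    mul_nonneg (mul_nonneg (mul_nonneg (by norm_num) (sq_nonneg u)) (sq_nonneg v)) hx.le
  have h19 : 0 ≤ 8*u*v^2 :=
    mul_nonneg (mul_nonneg (by norm_num) hu.le) (sq_nonneg v)
  have h20 : 0 ≤ 2*e*u*v^2 :=
    mul_nonneg (mul_nonneg (mul_nonneg (by norm_num) he) hu.le) (sq_nonneg v)
  have h21 : 0 ≤ 4*u*v^2*x :=
    mul_nonneg (mul_nonneg (mul_nonneg (by norm_num) hu.le) (sq_nonneg v)) hx.le
  have h22 : 0 ≤ e*u*v^2*x :=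
    mul_nonneg (mul_nonneg (mul_nonneg he hu.le) (sq_nonneg v)) hx.le
  linarith

private lemma stmt_9_mu (n : ℕ) (hn : 3 ≤ n) :
    0 < 4 * Real.cos (Real.pi / n) ^ 2 ∧ 4 * Real.cos (Real.pi / n) ^ 2 ≤ 4 := by
  have hπ := Real.pi_pos
  have hn2 : (2:ℝ) < n := by
    have : (3:ℝ) ≤ n := by exact_mod_cast hn
    linarith
  have h1 : 0 < Real.pi / n := by positivity
  have h2 : Real.pi / n < Real.pi / 2 := div_lt_div_of_pos_left hπ (by norm_num) hn2
  have hcpos : 0 < Real.cos (Real.pi / n) :=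
    Real.cos_pos_of_mem_Ioo ⟨by linarith, h2⟩
  have hcle : Real.cos (Real.pi / n) ≤ 1 := Real.cos_le_one _
  constructor
  · positivity
  · nlinarith

/-- On the boundary `T₁₃ = 4` or `T₂₄ = 4` of the deformation space, the Cartan matrix of the
general-position Coxeter polytope inducing `D²(; n₁₂, n₂₃, n₃₄, n₁₄) × ℝ` is nonsingular. -/
theorem stmt_9 (n₁₂ n₂₃ n₃₄ n₁₄ : ℕ)
    (hn₁₂ : 3 ≤ n₁₂) (hn₂₃ : 3 ≤ n₂₃) (hn₃₄ : 3 ≤ n₃₄) (hn₁₄ : 3 ≤ n₁₄)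
    (μ₁₂ μ₂₃ μ₃₄ μ₁₄ : ℝ)
    (hμ₁₂ : μ₁₂ = 4 * Real.cos (Real.pi / n₁₂) ^ 2)
    (hμ₂₃ : μ₂₃ = 4 * Real.cos (Real.pi / n₂₃) ^ 2)
    (hμ₃₄ : μ₃₄ = 4 * Real.cos (Real.pi / n₃₄) ^ 2)
    (hμ₁₄ : μ₁₄ = 4 * Real.cos (Real.pi / n₁₄) ^ 2)
    (v₁₃ v₂₃ v₂₄ v₃₄ v₄₂ : ℝ)
    (hv₂₃ : v₂₃ < 0) (hv₂₄ : v₂₄ < 0) (hv₃₄ : v₃₄ < 0) (hv₄₂ : v₄₂ < 0)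
    (hv₁₃ : v₁₃ ≤ -4) (hv₂₄₄₂ : 4 ≤ v₂₄ * v₄₂)
    (M : Matrix (Fin 4) (Fin 4) ℝ)
    (hM : M = !![2, -μ₁₂, v₁₃, -μ₁₄;
                 -1, 2, v₂₃, v₂₄;
                 -1, μ₂₃ / v₂₃, 2, v₃₄;
                 -1, v₄₂, μ₃₄ / v₃₄, 2])
    (hbd : v₁₃ = -4 ∨ v₂₄ * v₄₂ = 4) :
    M.det ≠ 0 := by
  obtain ⟨h12a, h12b⟩ := stmt_9_mu n₁₂ hn₁₂
  obtain ⟨h23a, h23b⟩ := stmt_9_mu n₂₃ hn₂₃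
  obtain ⟨h34a, h34b⟩ := stmt_9_mu n₃₄ hn₃₄
  obtain ⟨h14a, h14b⟩ := stmt_9_mu n₁₄ hn₁₄
  rw [← hμ₁₂] at h12a h12b
  rw [← hμ₂₃] at h23a h23b
  rw [← hμ₃₄] at h34a h34b
  rw [← hμ₁₄] at h14a h14b
  have hq : v₂₃ ≠ 0 := ne_of_lt hv₂₃
  have hs : v₃₄ ≠ 0 := ne_of_lt hv₃₄
  have hP := stmt_9_aux μ₁₂ μ₂₃ μ₃₄ μ₁₄ v₁₃ v₂₃ v₂₄ v₃₄ v₄₂ h12a.le h12b h23a h34a h14a h14b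
    hv₂₃ hv₂₄ hv₃₄ hv₄₂ hv₁₃ hv₂₄₄₂ hbd
  have hdet : M.det * (v₂₃ * v₃₄) =
      16*v₂₃*v₃₄ - 4*v₂₃*v₂₄*v₃₄*v₄₂ + 2*v₂₃^2*v₃₄^2*v₄₂ + 4*v₁₃*v₂₃*v₃₄
      - 2*v₁₃*v₂₃*v₃₄^2 + v₁₃*v₂₃*v₃₄^2*v₄₂ - v₁₃*v₂₃*v₂₄*v₃₄*v₄₂
      - 4*μ₁₄*v₂₃*v₃₄ + 2*μ₁₄*v₂₃*v₃₄*v₄₂ - μ₁₄*v₂₃^2*v₃₄*v₄₂ - 4*μ₃₄*v₂₃*v₃₄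
      + 2*μ₃₄*μ₁₄*v₂₃ - 4*μ₂₃*v₂₃*v₃₄ - 2*μ₂₃*v₁₃*v₃₄ + μ₂₃*v₁₃*v₂₄*v₃₄
      + μ₂₃*μ₁₄*v₂₃*v₃₄ + 2*μ₂₃*μ₃₄*v₂₄ - μ₂₃*μ₃₄*μ₁₄ - 4*μ₁₂*v₂₃*v₃₄
      + 2*μ₁₂*v₂₃*v₂₄*v₃₄ + 2*μ₁₂*v₂₃^2*v₃₄ - μ₁₂*v₂₃^2*v₃₄^2 + μ₁₂*μ₃₄*v₂₃*v₃₄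
      - μ₁₂*μ₃₄*v₂₃*v₂₄ := by
    subst hM
    simp [Matrix.det_succ_row_zero, Fin.sum_univ_succ, Fin.succAbove, Fin.castSucc, Fin.castAdd, Fin.castLE,
      Fin.ext_iff]
    field_simp
    ring
  intro h0
  rw [h0, zero_mul] at hdet
  linarith [hdet, hP]
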